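/- Let a_n > 0 and b_n ∈ ℝ, let B_j(x) be the 2×2 transfer matrix with rows (0, 1) and (−a_{j−1}/a_j, (x − b_j)/a_j), and for a positive integer N set X_n(z) = B_{n+N−1}(z)⋯B_n(z). Let K ⊂ ℂ be compact with 0 ∈ K, and suppose sup_{n≥1} sup_{z∈K} ‖B_n(z)‖ < ∞. Then there is c > 0 with sup_{z∈K} ‖X_n(z) − X_n(0)‖ ≤ c Σ_{j=0}^{N−1} 1/a_{n+j} for all n. In particular, if Σ_n 1/a_n < ∞ then Σ_n sup_{z∈K} ‖X_n(z) − X_n(0)‖ < ∞. -/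

import Mathlib

open Filter

attribute [local instance] Matrix.normedAddCommGroup

/-- Transfer matrix `B_j(z)` of a Jacobi matrix. -/
noncomputable def transfer (a : ℕ → ℝ) (b : ℕ → ℝ) (j : ℕ) (z : ℂ) : Matrix (Fin 2) (Fin 2) ℂ :=
  !![0, 1; -((a (j - 1) : ℝ) / a j : ℝ), (z - (b j : ℂ)) / (a j : ℂ)]

/-- `X_n(z) = B_{n+N−1}(z) ⋯ B_n(z)` (product in decreasing index order). -/
noncomputable def Xmat (a : ℕ → ℝ) (b : ℕ → ℝ) (N n : ℕ) (z : ℂ) : Matrix (Fin 2) (Fin 2) ℂ :=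
  ((List.range N).map (fun t => transfer a b (n + N - 1 - t) z)).prod

lemma my_norm_mul_le (A B : Matrix (Fin 2) (Fin 2) ℂ) : ‖A * B‖ ≤ 2 * ‖A‖ * ‖B‖ := by
  rw [Matrix.norm_le_iff (by positivity)]
  intro i j
  rw [Matrix.mul_apply]
  calc ‖∑ k, A i k * B k j‖ ≤ ∑ k, ‖A i k * B k j‖ := norm_sum_le _ _
    _ ≤ ∑ _k : Fin 2, ‖A‖ * ‖B‖ := Finset.sum_le_sum fun k _ => by
        rw [norm_mul]
        exact mul_le_mul (Matrix.norm_entry_le_entrywise_sup_norm A)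
          (Matrix.norm_entry_le_entrywise_sup_norm B) (norm_nonneg _) (norm_nonneg _)
    _ = 2 * ‖A‖ * ‖B‖ := by simp; ring

lemma my_norm_one_le : ‖(1 : Matrix (Fin 2) (Fin 2) ℂ)‖ ≤ 1 := by
  rw [Matrix.norm_le_iff (by norm_num)]
  intro i j
  rw [Matrix.one_apply]
  split <;> simp

lemma transfer_diff_norm (a b : ℕ → ℝ) (hapos : ∀ n, 0 < a n) (j : ℕ) (z : ℂ) :
    ‖transfer a b j z - transfer a b j 0‖ ≤ ‖z‖ / a j := by
  have haj := hapos j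
  rw [Matrix.norm_le_iff (by positivity)]
  intro i k
  fin_cases i <;> fin_cases k <;> simp [transfer] <;> try positivity
  have h : (z - (b j : ℂ)) / (a j : ℂ) - -(b j : ℂ) / (a j : ℂ) = z / (a j : ℂ) := by
    rw [div_sub_div_same]; ring_nf
  rw [h, norm_div, Complex.norm_real, Real.norm_eq_abs, abs_of_pos haj]

lemma Xmat_succ (a b : ℕ → ℝ) (N n : ℕ) (z : ℂ) :
    Xmat a b (N + 1) n z = transfer a b (n + N) z * Xmat a b N n z := by
  unfold Xmat
  rw [List.range_succ_eq_map, List.map_cons, List.prod_cons, List.map_map]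
  have h2 : (fun t => transfer a b (n + (N + 1) - 1 - t) z) ∘ Nat.succ
      = fun t => transfer a b (n + N - 1 - t) z := by
    funext t
    simp only [Function.comp_apply, Nat.succ_eq_add_one]
    have : n + (N + 1) - 1 - (t + 1) = n + N - 1 - t := by omega
    rw [this]
  rw [h2]
  show transfer a b (n + (N + 1) - 1 - 0) z * _ = _
  have h3 : n + (N + 1) - 1 - 0 = n + N := by omega
  rw [h3]

lemma key_bound (a b : ℕ → ℝ) (hapos : ∀ n, 0 < a n) (K : Set ℂ) (h0K : (0 : ℂ) ∈ K)
    (C M : ℝ) (hC : 1 ≤ C) (hM : 1 ≤ M)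
    (hB : ∀ n, 1 ≤ n → ∀ z ∈ K, ‖transfer a b n z‖ ≤ C)
    (hKM : ∀ z ∈ K, ‖z‖ ≤ M) :
    ∀ N n, 1 ≤ n → ∀ z ∈ K,
      ‖Xmat a b N n z - Xmat a b N n 0‖ ≤ (2*C)^N * M * ∑ j ∈ Finset.range N, 1 / a (n + j)
      ∧ ‖Xmat a b N n z‖ ≤ (2*C)^N := by
  intro N
  induction N with
  | zero =>
    intro n hn z hz
    constructor
    · simp [Xmat]
    · simpa [Xmat] using my_norm_one_le
  | succ N ih =>
    intro n hn z hz
    have hnN : 1 ≤ n + N := by omega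
    obtain ⟨ihd, ihz⟩ := ih n hn z hz
    have ih0 := (ih n hn 0 h0K).2
    have hBz := hB (n + N) hnN z hz
    have hB0 := hB (n + N) hnN 0 h0K
    have hdz : ‖transfer a b (n+N) z - transfer a b (n+N) 0‖ ≤ M / a (n+N) := by
      refine (transfer_diff_norm a b hapos (n+N) z).trans ?_
      exact div_le_div_of_nonneg_right (hKM z hz) (hapos _).le
    have hP : (1:ℝ) ≤ (2*C)^N := one_le_pow₀ (by linarith : (1:ℝ) ≤ 2*C)
    have hS : (0:ℝ) ≤ ∑ j ∈ Finset.range N, 1 / a (n + j) :=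
      Finset.sum_nonneg fun j _ => (one_div_pos.2 (hapos _)).le
    have ha := hapos (n + N)
    have hainv : (0:ℝ) ≤ 1 / a (n + N) := (one_div_pos.2 ha).le
    constructor
    · rw [Xmat_succ, Xmat_succ, Finset.sum_range_succ]
      have split : transfer a b (n+N) z * Xmat a b N n z - transfer a b (n+N) 0 * Xmat a b N n 0
          = transfer a b (n+N) z * (Xmat a b N n z - Xmat a b N n 0)
            + (transfer a b (n+N) z - transfer a b (n+N) 0) * Xmat a b N n 0 := by
        noncomm_ring
      rw [split]
      calc ‖_ + _‖ ≤ ‖transfer a b (n+N) z * (Xmat a b N n z - Xmat a b N n 0)‖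
            + ‖(transfer a b (n+N) z - transfer a b (n+N) 0) * Xmat a b N n 0‖ := norm_add_le _ _
        _ ≤ 2 * ‖transfer a b (n+N) z‖ * ‖Xmat a b N n z - Xmat a b N n 0‖
            + 2 * ‖transfer a b (n+N) z - transfer a b (n+N) 0‖ * ‖Xmat a b N n 0‖ := by
            exact add_le_add (my_norm_mul_le _ _) (my_norm_mul_le _ _)
        _ ≤ 2 * C * ((2*C)^N * M * ∑ j ∈ Finset.range N, 1 / a (n + j))
            + 2 * (M / a (n+N)) * (2*C)^N := by
            have h1 : ‖transfer a b (n+N) z‖ ≤ C := hBz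
            have hn1 : (0:ℝ) ≤ ‖Xmat a b N n z - Xmat a b N n 0‖ := norm_nonneg _
            have hn2 : (0:ℝ) ≤ ‖transfer a b (n+N) z - transfer a b (n+N) 0‖ := norm_nonneg _
            have hn3 : (0:ℝ) ≤ ‖Xmat a b N n 0‖ := norm_nonneg _
            nlinarith [ihd, ih0, hdz, norm_nonneg (transfer a b (n+N) z)]
        _ ≤ (2*C)^(N+1) * M * (∑ j ∈ Finset.range N, 1 / a (n + j) + 1 / a (n + N)) := by
            rw [pow_succ]
            have hMd : M / a (n+N) = M * (1 / a (n+N)) := by ring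
            have hB2 : 2 * (M / a (n+N)) * (2*C)^N
                ≤ (2*C)^N * (2*C) * M * (1 / a (n+N)) := by
              rw [hMd]
              nlinarith [mul_nonneg (mul_nonneg (show (0:ℝ) ≤ (2*C)^N by linarith)
                (show (0:ℝ) ≤ M by linarith)) hainv, hC]
            have e : (2*C)^N * (2*C) * M * (∑ j ∈ Finset.range N, 1 / a (n + j) + 1 / a (n + N))
                = 2 * C * ((2*C)^N * M * ∑ j ∈ Finset.range N, 1 / a (n + j))
                  + (2*C)^N * (2*C) * M * (1 / a (n+N)) := by ring
            rw [e]
            linarith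
    · rw [Xmat_succ]
      calc ‖transfer a b (n+N) z * Xmat a b N n z‖
          ≤ 2 * ‖transfer a b (n+N) z‖ * ‖Xmat a b N n z‖ := my_norm_mul_le _ _
        _ ≤ 2 * C * (2*C)^N := by nlinarith [norm_nonneg (Xmat a b N n z), norm_nonneg (transfer a b (n+N) z)]
        _ = (2*C)^(N+1) := by ring

/-- If the transfer matrices are uniformly bounded on a compact `K ∋ 0`, then
`‖X_n(z) − X_n(0)‖ ≤ c ∑_{j=0}^{N−1} 1/a_{n+j}` uniformly on `K`; in particular, in the
non-Carleman case the deviations are summable uniformly on `K`. -/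
theorem xmat_close_to_xmat_zero
    (a : ℕ → ℝ) (b : ℕ → ℝ) (hapos : ∀ n, 0 < a n) (N : ℕ) (hN : 0 < N)
    (K : Set ℂ) (hK : IsCompact K) (h0K : (0 : ℂ) ∈ K)
    (hbdd : ∃ C : ℝ, ∀ n, 1 ≤ n → ∀ z ∈ K, ‖transfer a b n z‖ ≤ C) :
    (∃ c > 0, ∀ n, 1 ≤ n → ∀ z ∈ K,
        ‖Xmat a b N n z - Xmat a b N n 0‖ ≤ c * ∑ j ∈ Finset.range N, 1 / a (n + j)) ∧
    (Summable (fun n => 1 / a n) →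
      Summable (fun n => ⨆ z : K, ‖Xmat a b N n (z : ℂ) - Xmat a b N n 0‖)) := by
  obtain ⟨C0, hC0⟩ := hbdd
  obtain ⟨M0, hM0⟩ := hK.isBounded.exists_norm_le
  set C := max C0 1 with hCdef
  set M := max M0 1 with hMdef
  have hC : 1 ≤ C := le_max_right _ _
  have hM : 1 ≤ M := le_max_right _ _
  have hB : ∀ n, 1 ≤ n → ∀ z ∈ K, ‖transfer a b n z‖ ≤ C :=
    fun n hn z hz => (hC0 n hn z hz).trans (le_max_left _ _)
  have hKM : ∀ z ∈ K, ‖z‖ ≤ M := fun z hz => (hM0 z hz).trans (le_max_left _ _)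
  have key := key_bound a b hapos K h0K C M hC hM hB hKM
  set c := (2*C)^N * M with hcdef
  have hc : 0 < c := by
    apply mul_pos (pow_pos (by linarith) N) (by linarith)
  haveI : Nonempty K := ⟨⟨0, h0K⟩⟩
  have hmain : ∀ n, 1 ≤ n → ∀ z ∈ K,
      ‖Xmat a b N n z - Xmat a b N n 0‖ ≤ c * ∑ j ∈ Finset.range N, 1 / a (n + j) :=
    fun n hn z hz => (key N n hn z hz).1
  refine ⟨⟨c, hc, hmain⟩, fun hsum => ?_⟩
  have hg : Summable (fun n => ∑ j ∈ Finset.range N, 1 / a (n + j)) :=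
    summable_sum fun j _ => (summable_nat_add_iff j).2 hsum
  rw [← summable_nat_add_iff 1]
  refine Summable.of_nonneg_of_le
    (f := fun n => c * ∑ j ∈ Finset.range N, 1 / a (n + 1 + j)) ?_ ?_ ?_
  · exact fun n => Real.iSup_nonneg fun z => norm_nonneg _
  · exact fun n => ciSup_le fun z => hmain (n + 1) (by omega) (z : ℂ) z.2
  · exact ((summable_nat_add_iff 1).2 hg).mul_left c
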